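/- Let d ≥ 0 and γ ≥ 1 be natural numbers, and let 0 = α_0 < α_1 < ⋯ < α_d be nonnegative integers such that any two of the α_i differ either by at most γ − 1 or by at least γ + 2. Define E := (γ + 1) + Σ_{i=1}^{d} min(α_i − α_{i−1}, γ + 1). Then there exist positive constants c, C and a natural number M_0, all depending only on d, such that for every natural number M ≥ M_0, the set A := ⋃_{i=0}^{d} M^{α_i}·[0, M] ⊆ ℤ and the number h := M^γ satisfy c · M^{E} ≤ |hA| ≤ C · M^{E}. -/

import Mathlib

open Pointwise


/-- image under multiplication distributes over pointwise sum -/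
lemma img_add_img (u : ℤ) (s t : Finset ℤ) :
    s.image (u * ·) + t.image (u * ·) = (s + t).image (u * ·) := by
  ext x
  simp only [Finset.mem_add, Finset.mem_image]
  constructor
  · rintro ⟨y, ⟨a, ha, rfl⟩, z, ⟨b, hb, rfl⟩, rfl⟩
    exact ⟨a + b, ⟨a, ha, b, hb, rfl⟩, by ring⟩
  · rintro ⟨c, ⟨a, ha, b, hb, rfl⟩, rfl⟩
    exact ⟨u * a, ⟨a, ha, rfl⟩, u * b, ⟨b, hb, rfl⟩, by ring⟩

lemma Icc_add_Icc' (a b : ℤ) (ha : 0 ≤ a) (hb : 0 ≤ b) :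
    Finset.Icc (0:ℤ) a + Finset.Icc (0:ℤ) b = Finset.Icc 0 (a + b) := by
  ext x
  simp only [Finset.mem_add, Finset.mem_Icc]
  constructor
  · rintro ⟨y, hy, z, hz, rfl⟩; omega
  · rintro ⟨hx0, hx⟩
    exact ⟨min x a, by omega, x - min x a, by omega, by omega⟩

/-- interval filling: [0,L] + t·[0,k] = [0, L + t k]  when 1 ≤ t ≤ L+1 -/
lemma Icc_add_dilated (L k t : ℤ) (hk : 0 ≤ k) (ht : 1 ≤ t) (htL : t ≤ L + 1) :
    Finset.Icc (0:ℤ) L + (Finset.Icc (0:ℤ) k).image (t * ·) = Finset.Icc 0 (L + t * k) := by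
  have hL : 0 ≤ L := by omega
  ext x
  simp only [Finset.mem_add, Finset.mem_image, Finset.mem_Icc]
  constructor
  · rintro ⟨y, hy, z, ⟨c, hc, rfl⟩, rfl⟩
    constructor
    · nlinarith [hc.1, hy.1]
    · nlinarith [hc.2, hy.2, hc.1]
  · rintro ⟨hx0, hx⟩
    have hqr : t * (x / t) + x % t = x := Int.mul_ediv_add_emod x t
    have hr0 : 0 ≤ x % t := Int.emod_nonneg x (by omega)
    have hrt : x % t < t := Int.emod_lt_of_pos x (by omega)
    have hq0 : 0 ≤ x / t := Int.ediv_nonneg hx0 (by omega)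
    set q := x / t with hq
    set c := min q k with hc
    have hck : c ≤ k := min_le_right _ _
    have hc0 : 0 ≤ c := le_min hq0 hk
    have hcq : c ≤ q := min_le_left _ _
    refine ⟨x - t * c, ⟨by nlinarith, ?_⟩, t * c, ⟨c, ⟨hc0, hck⟩, rfl⟩, by ring⟩
    rcases le_or_gt q k with h | h
    · have : c = q := min_eq_left h
      rw [this]; omega
    · have : c = k := min_eq_right h.le
      rw [this]; omega


lemma zero_finset_eq : (0 : Finset ℤ) = {0} := rfl

lemma zero_mem_sumF {ι : Type*} (s : Finset ι) (f : ι → Finset ℤ)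
    (h : ∀ i ∈ s, (0:ℤ) ∈ f i) : (0:ℤ) ∈ ∑ i ∈ s, f i := by
  induction s using Finset.cons_induction with
  | empty => simp [Finset.mem_zero]
  | cons a s ha ih =>
      rw [Finset.sum_cons]
      rw [Finset.mem_add]
      exact ⟨0, h a (Finset.mem_cons_self a s), 0, ih (fun i hi => h i (Finset.mem_cons_of_mem hi)), add_zero 0⟩

lemma mem_sumF {ι : Type*} (s : Finset ι) (f : ι → Finset ℤ) (g : ι → ℤ)
    (h : ∀ i ∈ s, g i ∈ f i) : (∑ i ∈ s, g i) ∈ ∑ i ∈ s, f i := by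
  induction s using Finset.cons_induction with
  | empty => simp [Finset.mem_zero]
  | cons a s ha ih =>
      rw [Finset.sum_cons, Finset.sum_cons, Finset.mem_add]
      exact ⟨g a, h a (Finset.mem_cons_self a s), ∑ i ∈ s, g i,
        ih (fun i hi => h i (Finset.mem_cons_of_mem hi)), rfl⟩

lemma nsmul_subset (n : ℕ) {A B : Finset ℤ} (h : A ⊆ B) : n • A ⊆ n • B := by
  induction n with
  | zero => simp [zero_nsmul]
  | succ n ih =>
      rw [succ_nsmul, succ_nsmul]
      exact Finset.add_subset_add ih h

lemma nsmul_dilated (n : ℕ) (u : ℤ) (m : ℤ) (hm : 0 ≤ m) :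
    n • ((Finset.Icc (0:ℤ) m).image (u * ·)) = (Finset.Icc (0:ℤ) ((n:ℤ)*m)).image (u * ·) := by
  induction n with
  | zero =>
      rw [zero_nsmul]
      ext x
      simp only [Finset.mem_zero, Finset.mem_image, Finset.mem_Icc]
      constructor
      · rintro rfl; exact ⟨0, by omega, by ring⟩
      · rintro ⟨a, ha, rfl⟩; have : a = 0 := by omega
        simp [this]
  | succ n ih =>
      rw [succ_nsmul, ih, img_add_img, Icc_add_Icc' _ _ (by positivity) hm]
      congr 1
      push_cast
      ring

lemma img_add_img_helper : True := trivial

lemma sum_subset_sumF {ι : Type*} (s : Finset ι) (f g : ι → Finset ℤ)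
    (h : ∀ i ∈ s, f i ⊆ g i) : ∑ i ∈ s, f i ⊆ ∑ i ∈ s, g i := by
  induction s using Finset.cons_induction with
  | empty => simp
  | cons a s ha ih =>
      rw [Finset.sum_cons, Finset.sum_cons]
      exact Finset.add_subset_add (h a (Finset.mem_cons_self a s))
        (ih (fun i hi => h i (Finset.mem_cons_of_mem hi)))

lemma zero_mem_nsmul (n : ℕ) {A : Finset ℤ} (h : (0:ℤ) ∈ A) : (0:ℤ) ∈ n • A := by
  induction n with
  | zero => rw [zero_nsmul]; exact Finset.mem_zero.2 rfl
  | succ n ih =>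
      rw [succ_nsmul, Finset.mem_add]
      exact ⟨0, ih, 0, h, add_zero 0⟩

section Reductions
variable (d M : ℕ) (α : ℕ → ℕ)

/-- the set A -/
noncomputable def setA : Finset ℤ := (Finset.range (d + 1)).biUnion
  (fun i => (Finset.Icc (0 : ℤ) (M : ℤ)).image fun x => ((M : ℤ) ^ α i) * x)

lemma zero_mem_setA : (0:ℤ) ∈ setA d M α := by
  apply Finset.mem_biUnion.2
  exact ⟨0, Finset.mem_range.2 (Nat.succ_pos d), Finset.mem_image.2 ⟨0, by simp, by simp⟩⟩

lemma setA_subset_sum : setA d M α ⊆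
    ∑ i ∈ Finset.range (d+1), (Finset.Icc (0:ℤ) (M:ℤ)).image (((M:ℤ) ^ α i) * ·) := by
  intro a ha
  obtain ⟨j, hj, hja⟩ := Finset.mem_biUnion.1 ha
  have : a = ∑ i ∈ Finset.range (d+1), (if i = j then a else 0) := by
    rw [Finset.sum_ite_eq' (Finset.range (d+1)) j (fun _ => a)]
    simp [hj]
  rw [this]
  apply mem_sumF
  intro i hi
  by_cases h : i = j
  · simp only [h, if_pos]
    exact hja
  · simp only [h, if_neg, if_false]
    exact Finset.mem_image.2 ⟨0, by simp, by simp⟩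

/-- upper reduction : n•A is inside the sum of dilated intervals of length n*M -/
lemma nsmul_setA_subset (n : ℕ) : n • setA d M α ⊆
    ∑ i ∈ Finset.range (d+1), (Finset.Icc (0:ℤ) ((n:ℤ)*(M:ℤ))).image (((M:ℤ) ^ α i) * ·) := by
  induction n with
  | zero =>
      rw [zero_nsmul]
      intro x hx
      rw [Finset.mem_zero.1 hx]
      apply zero_mem_sumF
      intro i hi
      exact Finset.mem_image.2 ⟨0, by simp, by simp⟩
  | succ n ih =>
      rw [succ_nsmul]
      calc n • setA d M α + setA d M α
          ⊆ (∑ i ∈ Finset.range (d+1), (Finset.Icc (0:ℤ) ((n:ℤ)*(M:ℤ))).image (((M:ℤ) ^ α i) * ·))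
            + ∑ i ∈ Finset.range (d+1), (Finset.Icc (0:ℤ) (M:ℤ)).image (((M:ℤ) ^ α i) * ·) :=
            Finset.add_subset_add ih (setA_subset_sum d M α)
        _ = ∑ i ∈ Finset.range (d+1), ((Finset.Icc (0:ℤ) ((n:ℤ)*(M:ℤ))).image (((M:ℤ) ^ α i) * ·)
            + (Finset.Icc (0:ℤ) (M:ℤ)).image (((M:ℤ) ^ α i) * ·)) := (Finset.sum_add_distrib).symm
        _ = ∑ i ∈ Finset.range (d+1), (Finset.Icc (0:ℤ) (((n:ℤ)+1)*(M:ℤ))).image (((M:ℤ) ^ α i) * ·) := by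
            apply Finset.sum_congr rfl
            intro i _
            rw [img_add_img, Icc_add_Icc' _ _ (by positivity) (by positivity)]
            congr 1
            ring
        _ = _ := by norm_num

/-- lower reduction -/
lemma sum_subset_nsmul_setA (k : ℕ) :
    (∑ i ∈ Finset.range (d+1), (Finset.Icc (0:ℤ) ((k:ℤ)*(M:ℤ))).image (((M:ℤ) ^ α i) * ·))
      ⊆ ((d+1)*k) • setA d M α := by
  have h1 : ∀ i, (Finset.Icc (0:ℤ) ((k:ℤ)*(M:ℤ))).image (((M:ℤ) ^ α i) * ·)
      = k • ((Finset.Icc (0:ℤ) (M:ℤ)).image (((M:ℤ) ^ α i) * ·)) := by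
    intro i
    rw [nsmul_dilated k _ _ (by positivity)]
  have h2 : ∀ i ∈ Finset.range (d+1),
      (Finset.Icc (0:ℤ) ((k:ℤ)*(M:ℤ))).image (((M:ℤ) ^ α i) * ·) ⊆ k • setA d M α := by
    intro i hi
    rw [h1 i]
    apply nsmul_subset
    intro x hx
    exact Finset.mem_biUnion.2 ⟨i, hi, hx⟩
  calc (∑ i ∈ Finset.range (d+1), (Finset.Icc (0:ℤ) ((k:ℤ)*(M:ℤ))).image (((M:ℤ) ^ α i) * ·))
      ⊆ ∑ _i ∈ Finset.range (d+1), k • setA d M α := sum_subset_sumF _ _ _ h2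
    _ = (d+1) • (k • setA d M α) := by rw [Finset.sum_const, Finset.card_range]
    _ = ((d+1)*k) • setA d M α := (mul_nsmul' (setA d M α) (d+1) k).symm

lemma sum_subset_nsmul_setA' (k h : ℕ) (hkh : (d+1)*k ≤ h) :
    (∑ i ∈ Finset.range (d+1), (Finset.Icc (0:ℤ) ((k:ℤ)*(M:ℤ))).image (((M:ℤ) ^ α i) * ·))
      ⊆ h • setA d M α := by
  intro x hx
  have hx1 : x ∈ ((d+1)*k) • setA d M α := sum_subset_nsmul_setA d M α k hx
  have : h • setA d M α = ((d+1)*k) • setA d M α + (h - (d+1)*k) • setA d M α := by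
    rw [← add_nsmul]
    congr 1
    omega
  rw [this, Finset.mem_add]
  exact ⟨x, hx1, 0, zero_mem_nsmul _ (zero_mem_setA d M α), add_zero x⟩

end Reductions

lemma alpha_mono (d : ℕ) (α : ℕ → ℕ) (hmono : ∀ i, i < d → α i < α (i+1)) :
    ∀ i j, i ≤ j → j ≤ d → α i ≤ α j := by
  intro i j
  induction j with
  | zero =>
      intro h1 _
      have : i = 0 := Nat.le_zero.1 h1
      rw [this]
  | succ j ih =>
      intro h1 h2
      rcases Nat.lt_or_ge i (j+1) with h | h
      · exact le_trans (ih (by omega) (by omega)) (le_of_lt (hmono j (by omega)))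
      · have : i = j+1 := by omega
        rw [this]

lemma card_add_dilated_ge (D : Finset ℤ) (u : ℤ) (hu : 0 < u)
    (hD : ∀ x ∈ D, 0 ≤ x ∧ x < u) (Λ : ℕ) :
    D.card * (Λ+1) ≤ (D + (Finset.Icc (0:ℤ) (Λ:ℤ)).image (u * ·)).card := by
  have hcard : (D ×ˢ Finset.Icc (0:ℤ) (Λ:ℤ)).card = D.card * (Λ+1) := by
    rw [Finset.card_product, Int.card_Icc]
    have : ((Λ:ℤ) + 1 - 0).toNat = Λ + 1 := by omega
    rw [this]
  rw [← hcard]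
  apply Finset.card_le_card_of_injOn (fun p => p.1 + u * p.2)
  · rintro ⟨a, b⟩ hab
    rw [Finset.mem_coe, Finset.mem_product] at hab
    exact Finset.mem_add.2 ⟨a, hab.1, u * b, Finset.mem_image.2 ⟨b, hab.2, rfl⟩, rfl⟩
  · rintro ⟨a, b⟩ hab ⟨a', b'⟩ hab' heq
    simp only [Finset.coe_product, Set.mem_prod, Finset.mem_coe, Finset.mem_product,
      Finset.mem_Icc] at hab hab'
    simp only at heq
    obtain ⟨ha, hb⟩ := hab
    obtain ⟨ha', hb'⟩ := hab'
    obtain ⟨ha0, hau⟩ := hD a ha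
    obtain ⟨ha0', hau'⟩ := hD a' ha'
    have hkey : a - a' = u * (b' - b) := by linarith
    have hb1 : b' - b < 1 := by
      by_contra hc
      push_neg at hc
      have : u * 1 ≤ u * (b' - b) := mul_le_mul_of_nonneg_left hc (le_of_lt hu)
      simp at this
      omega
    have hb2 : (-1 : ℤ) < b' - b := by
      by_contra hc
      push_neg at hc
      have : u * (b' - b) ≤ u * (-1) := mul_le_mul_of_nonneg_left hc (le_of_lt hu)
      simp at this
      omega
    have hbb : b = b' := by omega
    have haa : a = a' := by
      rw [hbb] at hkey
      simp at hkey
      omega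
    simp [haa, hbb]

set_option maxHeartbeats 1000000 in
lemma upper_inv (d γ M : ℕ) (hγ : 1 ≤ γ) (hM : 2 ≤ M) (α : ℕ → ℕ)
    (hmono : ∀ i, i < d → α i < α (i+1))
    (hdich : ∀ i, i < d → (α (i+1) - α i ≤ γ - 1 ∨ γ + 2 ≤ α (i+1) - α i)) :
    ∀ n, n ≤ d → ∃ l, l ≤ n ∧ ∃ (B : Finset ℤ) (Λ : ℕ) (e : ℕ),
      (∑ i ∈ Finset.range (n+1),
          (Finset.Icc (0:ℤ) (((M^γ*M : ℕ)):ℤ)).image (((M:ℤ) ^ α i) * ·))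
        ⊆ B + (Finset.Icc (0:ℤ) (Λ:ℤ)).image (((M:ℤ) ^ α l) * ·)
      ∧ Λ ≤ (n - l + 1) * (M^(α n - α l) * (M^γ*M))
      ∧ (γ+1) + (∑ i ∈ Finset.range n, min (α (i+1) - α i) (γ+1)) = e + (α n - α l) + (γ+1)
      ∧ B.card ≤ (2*(d+1))^n * M^e := by
  have hmono' := alpha_mono d α hmono
  have hWpos : 1 ≤ M^γ*M := by
    have : 1 ≤ M^γ := Nat.one_le_pow _ _ (by omega)
    calc 1 ≤ 1*1 := by omega
      _ ≤ M^γ*M := Nat.mul_le_mul this (by omega)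
  generalize hW : M^γ * M = W
  intro n
  induction n with
  | zero =>
      intro _
      refine ⟨0, le_refl 0, {0}, W, 0, ?_, ?_, ?_, ?_⟩
      · rw [show ({0} : Finset ℤ) = 0 from rfl, zero_add]
        intro x hx
        simpa using hx
      · simp
      · simp
      · simp
  | succ n ih =>
      intro hn1
      have hnd : n < d := hn1
      obtain ⟨l, hl, B, Λ, e, hsub, hΛ, hE, hcard⟩ := ih (by omega)
      have hαmono : α l ≤ α n := hmono' l n hl (by omega)
      have hαn : α n < α (n+1) := hmono n hnd
      have hαl1 : α l ≤ α (n+1) := by omega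
      have hW1 : 1 ≤ W := hW ▸ hWpos
      -- the new interval piece
      have hsum : ∑ i ∈ Finset.range (n+1+1),
            (Finset.Icc (0:ℤ) ((W:ℕ):ℤ)).image (((M:ℤ) ^ α i) * ·)
          = (∑ i ∈ Finset.range (n+1),
            (Finset.Icc (0:ℤ) ((W:ℕ):ℤ)).image (((M:ℤ) ^ α i) * ·))
            + (Finset.Icc (0:ℤ) ((W:ℕ):ℤ)).image (((M:ℤ) ^ α (n+1)) * ·) :=
        Finset.sum_range_succ _ (n+1)
      rcases hdich n hnd with hsmall | hlarge
      · -- small gap : extend the current class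
        have hδ : α (n+1) - α n ≤ γ - 1 := hsmall
        refine ⟨l, by omega, B, Λ + M^(α (n+1) - α l) * W, e, ?_, ?_, ?_, ?_⟩
        · rw [hsum]
          have himg : (Finset.Icc (0:ℤ) ((W:ℕ):ℤ)).image (((M:ℤ) ^ α (n+1)) * ·)
              = ((Finset.Icc (0:ℤ) ((W:ℕ):ℤ)).image (((M:ℤ) ^ (α (n+1) - α l)) * ·)).image
                  (((M:ℤ) ^ α l) * ·) := by
            rw [Finset.image_image]
            apply Finset.image_congr
            intro x _
            simp only [Function.comp]
            rw [← mul_assoc, ← pow_add]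
            congr 2
            omega
          calc (∑ i ∈ Finset.range (n+1),
                (Finset.Icc (0:ℤ) ((W:ℕ):ℤ)).image (((M:ℤ) ^ α i) * ·))
                + (Finset.Icc (0:ℤ) ((W:ℕ):ℤ)).image (((M:ℤ) ^ α (n+1)) * ·)
              ⊆ (B + (Finset.Icc (0:ℤ) (Λ:ℤ)).image (((M:ℤ) ^ α l) * ·))
                + (Finset.Icc (0:ℤ) ((W:ℕ):ℤ)).image (((M:ℤ) ^ α (n+1)) * ·) :=
                Finset.add_subset_add hsub (Finset.Subset.refl _)
            _ = B + ((Finset.Icc (0:ℤ) (Λ:ℤ)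
                + (Finset.Icc (0:ℤ) ((W:ℕ):ℤ)).image (((M:ℤ) ^ (α (n+1) - α l)) * ·)).image
                  (((M:ℤ) ^ α l) * ·)) := by
                rw [himg, add_assoc, img_add_img]
            _ ⊆ B + (Finset.Icc (0:ℤ) (((Λ + M^(α (n+1) - α l) * W : ℕ)):ℤ)).image
                  (((M:ℤ) ^ α l) * ·) := by
                apply Finset.add_subset_add_left
                apply Finset.image_subset_image
                intro x hx
                rw [Finset.mem_add] at hx
                obtain ⟨y, hy, z, hz, rfl⟩ := hx
                obtain ⟨c, hc, rfl⟩ := Finset.mem_image.1 hz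
                rw [Finset.mem_Icc] at hy hc ⊢
                have ht : (0:ℤ) < (M:ℤ)^(α (n+1) - α l) := by positivity
                constructor
                · exact add_nonneg hy.1 (mul_nonneg ht.le hc.1)
                · push_cast
                  have h6 : ((M:ℤ))^(α (n+1) - α l) * c ≤ ((M:ℤ))^(α (n+1) - α l) * (W:ℤ) :=
                    mul_le_mul_of_nonneg_left hc.2 ht.le
                  exact add_le_add hy.2 h6
        · -- Λ bound
          have h1 : M^(α n - α l) ≤ M^(α (n+1) - α l) :=
            Nat.pow_le_pow_right (by omega) (by omega)
          have h2 : Λ ≤ (n - l + 1) * (M^(α (n+1) - α l) * W) :=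
            le_trans hΛ (Nat.mul_le_mul_left _ (Nat.mul_le_mul_right _ h1))
          have h3 : (n + 1 - l + 1) = (n - l + 1) + 1 := by omega
          rw [h3, add_mul, one_mul]
          omega
        · -- exponent bookkeeping
          rw [Finset.sum_range_succ]
          have hmin : min (α (n+1) - α n) (γ+1) = α (n+1) - α n := min_eq_left (by omega)
          rw [hmin]
          have h5 : α (n+1) - α l = (α n - α l) + (α (n+1) - α n) := by omega
          rw [h5]
          clear hsub hcard hsum ih
          omega
        · calc B.card ≤ (2*(d+1))^n * M^e := hcard
            _ ≤ (2*(d+1))^(n+1) * M^e := by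
                apply Nat.mul_le_mul_right
                apply Nat.pow_le_pow_right (by omega) (by omega)
      · -- large gap : start a new class
        have hδ : γ + 2 ≤ α (n+1) - α n := hlarge
        refine ⟨n+1, le_refl _, B + (Finset.Icc (0:ℤ) (Λ:ℤ)).image (((M:ℤ) ^ α l) * ·),
          W, e + (α n - α l) + (γ+1), ?_, ?_, ?_, ?_⟩
        · rw [hsum]
          exact Finset.add_subset_add hsub (Finset.Subset.refl _)
        · simp
        · rw [Finset.sum_range_succ]
          have hmin : min (α (n+1) - α n) (γ+1) = γ+1 := min_eq_right (by omega)
          rw [hmin]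
          omega
        · -- card bound
          have hIcc : ((Finset.Icc (0:ℤ) (Λ:ℤ)).image (((M:ℤ) ^ α l) * ·)).card ≤ Λ + 1 := by
            calc ((Finset.Icc (0:ℤ) (Λ:ℤ)).image (((M:ℤ) ^ α l) * ·)).card
                ≤ (Finset.Icc (0:ℤ) (Λ:ℤ)).card := Finset.card_image_le
              _ = Λ + 1 := by rw [Int.card_Icc]; omega
          have hX1 : 1 ≤ M^(α n - α l) * W :=
            Nat.one_le_iff_ne_zero.2 (by positivity)
          have hΛ1 : Λ + 1 ≤ 2*(d+1) * (M^(α n - α l) * W) := by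
            have : (n - l + 1) ≤ d + 1 := by omega
            have h4 : Λ ≤ (d+1) * (M^(α n - α l) * W) :=
              le_trans hΛ (Nat.mul_le_mul_right _ this)
            nlinarith
          calc (B + (Finset.Icc (0:ℤ) (Λ:ℤ)).image (((M:ℤ) ^ α l) * ·)).card
              ≤ B.card * ((Finset.Icc (0:ℤ) (Λ:ℤ)).image (((M:ℤ) ^ α l) * ·)).card :=
                Finset.card_add_le
            _ ≤ ((2*(d+1))^n * M^e) * (Λ + 1) := Nat.mul_le_mul hcard hIcc
            _ ≤ ((2*(d+1))^n * M^e) * (2*(d+1) * (M^(α n - α l) * W)) :=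
                Nat.mul_le_mul_left _ hΛ1
            _ = (2*(d+1))^(n+1) * (M^e * M^(α n - α l) * W) := by ring
            _ = (2*(d+1))^(n+1) * M^(e + (α n - α l) + (γ+1)) := by
                simp only [pow_add, pow_one, ← hW]

set_option maxHeartbeats 1600000 in
lemma lower_inv (d γ M : ℕ) (hγ : 1 ≤ γ) (hM : 2 ≤ M) (α : ℕ → ℕ)
    (hmono : ∀ i, i < d → α i < α (i+1))
    (hdich : ∀ i, i < d → (α (i+1) - α i ≤ γ - 1 ∨ γ + 2 ≤ α (i+1) - α i))
    (k : ℕ)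
    (hk1 : M^(γ-1) ≤ k)
    (hk2 : 2*(d+1)*k ≤ M^γ * M)
    (hk4 : M^γ * M ≤ 2*(d+1)*(k*M)) :
    ∀ n, n ≤ d → ∃ l, l ≤ n ∧ ∃ (D : Finset ℤ) (Λ : ℕ),
      D + (Finset.Icc (0:ℤ) (Λ:ℤ)).image (((M:ℤ) ^ α l) * ·)
        ⊆ ∑ i ∈ Finset.range (n+1),
            (Finset.Icc (0:ℤ) (((k*M : ℕ)):ℤ)).image (((M:ℤ) ^ α i) * ·)
      ∧ (∀ x ∈ D, 0 ≤ x ∧ x < (M:ℤ) ^ α l)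
      ∧ M^(α n - α l) * (k*M) ≤ Λ
      ∧ Λ ≤ (n - l + 1) * (M^(α n - α l) * (k*M))
      ∧ M^((γ+1) + ∑ i ∈ Finset.range n, min (α (i+1) - α i) (γ+1))
          ≤ (2*(d+1))^(n+1) * (D.card * (Λ+1)) := by
  have hmono' := alpha_mono d α hmono
  have hk0 : 1 ≤ k := le_trans (Nat.one_le_pow _ _ (by omega)) hk1
  have hkM : 1 ≤ k*M := by
    calc 1 ≤ 1*1 := by omega
      _ ≤ k*M := Nat.mul_le_mul hk0 (by omega)
  intro n
  induction n with
  | zero =>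
      intro _
      refine ⟨0, le_refl 0, {0}, k*M, ?_, ?_, ?_, ?_, ?_⟩
      · rw [show ({0} : Finset ℤ) = 0 from rfl, zero_add]
        intro x hx
        simpa using hx
      · intro x hx
        rw [Finset.mem_singleton] at hx
        subst hx
        exact ⟨le_refl 0, by positivity⟩
      · simp
      · simp
      · simp only [Finset.range_zero, Finset.sum_empty, add_zero, Finset.card_singleton, one_mul]
        calc M^(γ+1) = M^γ * M := by rw [pow_succ]
          _ ≤ 2*(d+1)*(k*M) := hk4
          _ ≤ 2*(d+1)*(k*M+1) := Nat.mul_le_mul_left _ (by omega)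
          _ = (2*(d+1))^(0+1) * (k*M+1) := by rw [pow_one]
  | succ n ih =>
      intro hn1
      have hnd : n < d := hn1
      obtain ⟨l, hl, D, Λ, hsub, hpos, hΛlo, hΛhi, hcard⟩ := ih (by omega)
      have hαmono : α l ≤ α n := hmono' l n hl (by omega)
      have hαn : α n < α (n+1) := hmono n hnd
      have hαl1 : α l ≤ α (n+1) := by omega
      have hsum : ∑ i ∈ Finset.range (n+1+1),
            (Finset.Icc (0:ℤ) (((k*M : ℕ)):ℤ)).image (((M:ℤ) ^ α i) * ·)
          = (∑ i ∈ Finset.range (n+1),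
            (Finset.Icc (0:ℤ) (((k*M : ℕ)):ℤ)).image (((M:ℤ) ^ α i) * ·))
            + (Finset.Icc (0:ℤ) (((k*M : ℕ)):ℤ)).image (((M:ℤ) ^ α (n+1)) * ·) :=
        Finset.sum_range_succ _ (n+1)
      rcases hdich n hnd with hsmall | hlarge
      · -- small gap : extend current class using interval filling
        have hδ : α (n+1) - α n ≤ γ - 1 := hsmall
        -- t = M^(α (n+1) - α l) satisfies t ≤ Λ
        have htΛ : M^(α (n+1) - α l) ≤ Λ := by
          calc M^(α (n+1) - α l) = M^(α n - α l) * M^(α (n+1) - α n) := by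
                rw [← pow_add]
                congr 1
                omega
            _ ≤ M^(α n - α l) * M^(γ-1) := Nat.mul_le_mul_left _ (Nat.pow_le_pow_right (by omega) (by omega))
            _ ≤ M^(α n - α l) * k := Nat.mul_le_mul_left _ hk1
            _ ≤ M^(α n - α l) * (k*M) := by
                rw [← mul_assoc]
                exact Nat.le_mul_of_pos_right _ (by omega)
            _ ≤ Λ := hΛlo
        refine ⟨l, by omega, D, Λ + M^(α (n+1) - α l) * (k*M), ?_, hpos, ?_, ?_, ?_⟩
        · rw [hsum]
          have himg : (Finset.Icc (0:ℤ) (((k*M:ℕ)):ℤ)).image (((M:ℤ) ^ α (n+1)) * ·)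
              = ((Finset.Icc (0:ℤ) (((k*M:ℕ)):ℤ)).image (((M:ℤ) ^ (α (n+1) - α l)) * ·)).image
                  (((M:ℤ) ^ α l) * ·) := by
            rw [Finset.image_image]
            apply Finset.image_congr
            intro x _
            simp only [Function.comp]
            rw [← mul_assoc, ← pow_add]
            congr 2
            omega
          have hfill : Finset.Icc (0:ℤ) (Λ:ℤ)
              + (Finset.Icc (0:ℤ) (((k*M:ℕ)):ℤ)).image (((M:ℤ) ^ (α (n+1) - α l)) * ·)
              = Finset.Icc (0:ℤ) (((Λ + M^(α (n+1) - α l) * (k*M) : ℕ)):ℤ) := by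
            have hfd := Icc_add_dilated (Λ:ℤ) ((k*M:ℕ):ℤ) ((M:ℤ)^(α (n+1) - α l))
              (by positivity) (one_le_pow₀ (by exact_mod_cast (by omega : 1 ≤ M)))
              (by
                have : ((M^(α (n+1) - α l) : ℕ) : ℤ) ≤ (Λ:ℤ) := by exact_mod_cast htΛ
                push_cast at this ⊢
                omega)
            rw [hfd]
            congr 1
          rw [← hfill, ← img_add_img, ← himg, ← add_assoc]
          exact Finset.add_subset_add hsub (Finset.Subset.refl _)
        · -- lower bound on new Λ
          have h1 : M^(α (n+1) - α l) * (k*M) ≤ Λ + M^(α (n+1) - α l) * (k*M) := by omega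
          exact h1
        · -- upper bound on new Λ
          have h1 : M^(α n - α l) ≤ M^(α (n+1) - α l) :=
            Nat.pow_le_pow_right (by omega) (by omega)
          have h2 : Λ ≤ (n - l + 1) * (M^(α (n+1) - α l) * (k*M)) :=
            le_trans hΛhi (Nat.mul_le_mul_left _ (Nat.mul_le_mul_right _ h1))
          have h3 : (n + 1 - l + 1) = (n - l + 1) + 1 := by omega
          rw [h3, add_mul, one_mul]
          omega
        · -- cardinality bound
          rw [Finset.sum_range_succ]
          have hmin : min (α (n+1) - α n) (γ+1) = α (n+1) - α n := min_eq_left (by omega)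
          rw [hmin]
          have hEeq : (γ+1) + (∑ i ∈ Finset.range n, min (α (i+1) - α i) (γ+1) + (α (n+1) - α n))
              = ((γ+1) + ∑ i ∈ Finset.range n, min (α (i+1) - α i) (γ+1)) + (α (n+1) - α n) := by
            omega
          rw [hEeq, pow_add]
          -- M^{E_n} * M^δ ≤ (2(d+1))^{n+1} D.card (Λ+1) M^δ ≤ (2(d+1))^{n+2} D.card (Λ'+1)
          have hstep1 : M^((γ+1) + ∑ i ∈ Finset.range n, min (α (i+1) - α i) (γ+1))
                * M^(α (n+1) - α n)
              ≤ ((2*(d+1))^(n+1) * (D.card * (Λ+1))) * M^(α (n+1) - α n) :=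
            Nat.mul_le_mul_right _ hcard
          refine le_trans hstep1 ?_
          -- suffices : (Λ+1) * M^δ ≤ 2(d+1) * (Λ'+1)
          have hkey : (Λ+1) * M^(α (n+1) - α n) ≤ 2*(d+1) * ((Λ + M^(α (n+1) - α l) * (k*M))+1) := by
            have hA1 : Λ * M^(α (n+1) - α n) ≤ (d+1) * (M^(α (n+1) - α l) * (k*M)) := by
              calc Λ * M^(α (n+1) - α n) ≤ ((n-l+1) * (M^(α n - α l) * (k*M))) * M^(α (n+1) - α n) :=
                    Nat.mul_le_mul_right _ hΛhi
                _ ≤ ((d+1) * (M^(α n - α l) * (k*M))) * M^(α (n+1) - α n) := by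
                    apply Nat.mul_le_mul_right
                    apply Nat.mul_le_mul_right
                    omega
                _ = (d+1) * ((M^(α n - α l) * M^(α (n+1) - α n)) * (k*M)) := by ring
                _ = (d+1) * (M^(α (n+1) - α l) * (k*M)) := by
                    rw [← pow_add]
                    congr 3
                    omega
            have hA2 : M^(α (n+1) - α n) ≤ M^(α (n+1) - α l) * (k*M) := by
              calc M^(α (n+1) - α n) ≤ M^(α (n+1) - α l) := Nat.pow_le_pow_right (by omega) (by omega)
                _ = M^(α (n+1) - α l) * 1 := by omega
                _ ≤ M^(α (n+1) - α l) * (k*M) := Nat.mul_le_mul_left _ hkM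
            have hexp : (Λ+1) * M^(α (n+1) - α n) = Λ * M^(α (n+1) - α n) + M^(α (n+1) - α n) := by ring
            rw [hexp]
            have : Λ * M^(α (n+1) - α n) + M^(α (n+1) - α n)
                ≤ (d+1) * (M^(α (n+1) - α l) * (k*M)) + M^(α (n+1) - α l) * (k*M) :=
              Nat.add_le_add hA1 hA2
            refine le_trans this ?_
            have hd2 : (d+1) * (M^(α (n+1) - α l) * (k*M)) + M^(α (n+1) - α l) * (k*M)
                = (d+2) * (M^(α (n+1) - α l) * (k*M)) := by ring
            rw [hd2]
            calc (d+2) * (M^(α (n+1) - α l) * (k*M))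
                ≤ (2*(d+1)) * (M^(α (n+1) - α l) * (k*M)) := Nat.mul_le_mul_right _ (by omega)
              _ ≤ 2*(d+1) * ((Λ + M^(α (n+1) - α l) * (k*M))+1) := Nat.mul_le_mul_left _ (by omega)
          calc ((2*(d+1))^(n+1) * (D.card * (Λ+1))) * M^(α (n+1) - α n)
              = (2*(d+1))^(n+1) * D.card * ((Λ+1) * M^(α (n+1) - α n)) := by ring
            _ ≤ (2*(d+1))^(n+1) * D.card * (2*(d+1) * ((Λ + M^(α (n+1) - α l) * (k*M))+1)) :=
                Nat.mul_le_mul_left _ hkey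
            _ = (2*(d+1))^(n+1+1) * (D.card * ((Λ + M^(α (n+1) - α l) * (k*M))+1)) := by ring
      · -- large gap : start a new class
        have hδ : γ + 2 ≤ α (n+1) - α n := hlarge
        set D' : Finset ℤ := D + (Finset.Icc (0:ℤ) (Λ:ℤ)).image (((M:ℤ) ^ α l) * ·) with hD'
        have hΛ1 : Λ + 1 ≤ 2*(d+1) * (M^(α n - α l) * (k*M)) := by
          have hX1 : 1 ≤ M^(α n - α l) * (k*M) :=
            Nat.one_le_iff_ne_zero.2 (by positivity)
          have h4 : Λ ≤ (d+1) * (M^(α n - α l) * (k*M)) :=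
            le_trans hΛhi (Nat.mul_le_mul_right _ (by omega))
          nlinarith
        have hbound : M^(α l) * (Λ + 1) ≤ M^(α (n+1)) := by
          calc M^(α l) * (Λ + 1) ≤ M^(α l) * (2*(d+1) * (M^(α n - α l) * (k*M))) :=
                Nat.mul_le_mul_left _ hΛ1
            _ = (M^(α l) * M^(α n - α l)) * (2*(d+1)*k*M) := by ring
            _ = M^(α n) * (2*(d+1)*k*M) := by
                rw [← pow_add]
                congr 2
                omega
            _ ≤ M^(α n) * ((M^γ * M)*M) := by
                apply Nat.mul_le_mul_left
                apply Nat.mul_le_mul_right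
                exact hk2
            _ = M^(α n + γ + 1 + 1) := by
                rw [pow_succ, pow_succ, pow_add]
                ring
            _ ≤ M^(α (n+1)) := Nat.pow_le_pow_right (by omega) (by omega)
        have hposD' : ∀ x ∈ D', 0 ≤ x ∧ x < (M:ℤ) ^ α (n+1) := by
          intro x hx
          rw [hD', Finset.mem_add] at hx
          obtain ⟨a, ha, z, hz, rfl⟩ := hx
          obtain ⟨c, hc, rfl⟩ := Finset.mem_image.1 hz
          rw [Finset.mem_Icc] at hc
          obtain ⟨ha0, hau⟩ := hpos a ha
          have hu : (0:ℤ) < (M:ℤ)^(α l) := by positivity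
          constructor
          · exact add_nonneg ha0 (mul_nonneg hu.le hc.1)
          · have h1 : a + (M:ℤ)^(α l) * c < (M:ℤ)^(α l) * ((Λ:ℤ) + 1) := by
              have : (M:ℤ)^(α l) * c ≤ (M:ℤ)^(α l) * (Λ:ℤ) := mul_le_mul_of_nonneg_left hc.2 hu.le
              nlinarith
            have h2 : ((M^(α l) * (Λ + 1) : ℕ) : ℤ) ≤ ((M^(α (n+1)) : ℕ) : ℤ) := by exact_mod_cast hbound
            push_cast at h2
            omega
        have hcardD' : D.card * (Λ+1) ≤ D'.card := by
          rw [hD']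
          exact card_add_dilated_ge D ((M:ℤ)^(α l)) (by positivity) hpos Λ
        refine ⟨n+1, le_refl _, D', k*M, ?_, hposD', ?_, ?_, ?_⟩
        · rw [hsum, hD']
          exact Finset.add_subset_add hsub (Finset.Subset.refl _)
        · simp
        · simp
        · rw [Finset.sum_range_succ]
          have hmin : min (α (n+1) - α n) (γ+1) = γ+1 := min_eq_right (by omega)
          rw [hmin]
          have hEeq : (γ+1) + (∑ i ∈ Finset.range n, min (α (i+1) - α i) (γ+1) + (γ+1))
              = ((γ+1) + ∑ i ∈ Finset.range n, min (α (i+1) - α i) (γ+1)) + (γ+1) := by omega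
          rw [hEeq, pow_add]
          have hstep1 : M^((γ+1) + ∑ i ∈ Finset.range n, min (α (i+1) - α i) (γ+1)) * M^(γ+1)
              ≤ ((2*(d+1))^(n+1) * (D.card * (Λ+1))) * M^(γ+1) :=
            Nat.mul_le_mul_right _ hcard
          refine le_trans hstep1 ?_
          have hkey : M^(γ+1) ≤ 2*(d+1) * (k*M+1) := by
            calc M^(γ+1) = M^γ * M := by rw [pow_succ]
              _ ≤ 2*(d+1)*(k*M) := hk4
              _ ≤ 2*(d+1)*(k*M+1) := Nat.mul_le_mul_left _ (by omega)
          calc ((2*(d+1))^(n+1) * (D.card * (Λ+1))) * M^(γ+1)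
              ≤ ((2*(d+1))^(n+1) * (D.card * (Λ+1))) * (2*(d+1) * (k*M+1)) :=
                Nat.mul_le_mul_left _ hkey
            _ = (2*(d+1))^(n+1+1) * ((D.card * (Λ+1)) * (k*M+1)) := by ring
            _ ≤ (2*(d+1))^(n+1+1) * (D'.card * (k*M+1)) :=
                Nat.mul_le_mul_left _ (Nat.mul_le_mul_right _ hcardD')

set_option maxHeartbeats 1600000 in
/-- **Lemma (main multiscale estimate).** Let `d ≥ 0`, and let `γ ≥ 1` and
`0 = α_0 < α_1 < ⋯ < α_d` be such that any two `α_i` differ by at most `γ − 1` or by at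
least `γ + 2`.  With `E := (γ+1) + Σ_{i=1}^{d} min(α_i − α_{i−1}, γ+1)`, there are
positive constants `c, C` and a threshold `M₀`, depending only on `d`, such that for all
`M ≥ M₀` the set `A := ⋃_{i=0}^{d} M^{α_i}·[0, M]` and `h := M^γ` satisfy
`c·M^E ≤ |hA| ≤ C·M^E`. -/
theorem multiscale_sumset_estimate (d : ℕ) :
    ∃ c C : ℝ, 0 < c ∧ 0 < C ∧ ∃ M₀ : ℕ,
      ∀ γ : ℕ, 1 ≤ γ →
      ∀ α : ℕ → ℕ, α 0 = 0 → (∀ i, i < d → α i < α (i + 1)) →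
        (∀ i j : ℕ, i < j → j ≤ d →
          (α j - α i ≤ γ - 1 ∨ γ + 2 ≤ α j - α i)) →
      ∀ E : ℕ, E = (γ + 1) + ∑ i ∈ Finset.range d, min (α (i + 1) - α i) (γ + 1) →
      ∀ M : ℕ, M₀ ≤ M →
      ∀ A : Finset ℤ,
        A = (Finset.range (d + 1)).biUnion
          (fun i => (Finset.Icc (0 : ℤ) (M : ℤ)).image fun x => ((M : ℤ) ^ α i) * x) →
        c * (M : ℝ) ^ E ≤ ((M ^ γ • A).card : ℝ) ∧
          ((M ^ γ • A).card : ℝ) ≤ C * (M : ℝ) ^ E := by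
  set K : ℕ := (2*(d+1))^(d+1) with hK
  have hKpos : 0 < K := by positivity
  refine ⟨(K:ℝ)⁻¹, (K:ℝ), by positivity, by positivity, 2*d+2, ?_⟩
  intro γ hγ α hα0 hmono hpair E hE M hM A hA
  have hM2 : 2 ≤ M := by omega
  have hmono' := alpha_mono d α hmono
  have hdich : ∀ i, i < d → (α (i+1) - α i ≤ γ - 1 ∨ γ + 2 ≤ α (i+1) - α i) := by
    intro i hi
    exact hpair i (i+1) (by omega) (by omega)
  have hA' : A = setA d M α := hA
  -- arithmetic facts about k = M^γ / (d+1)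
  set k : ℕ := M^γ / (d+1) with hk
  have hdk : (d+1)*k ≤ M^γ := by
    rw [hk, mul_comm]
    exact Nat.div_mul_le_self _ _
  have hmod : (d+1) * k + M^γ % (d+1) = M^γ := by rw [hk]; exact Nat.div_add_mod _ _
  have hmodlt : M^γ % (d+1) < d+1 := Nat.mod_lt _ (by omega)
  have hup : M^γ ≤ (d+1)*k + d := by omega
  have hP1 : 1 ≤ M^(γ-1) := Nat.one_le_pow _ _ (by omega)
  have hPM : M^(γ-1) * M = M^γ := by
    rw [← pow_succ]
    congr 1
    omega
  have hPMle : M^(γ-1) * (2*d+2) ≤ M^(γ-1) * M := Nat.mul_le_mul_left _ hM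
  have hPd : (d+1)*(2*(M^(γ-1))) = M^(γ-1) * (2*d+2) := by ring
  have hC : (d+1)*(k+1) = (d+1)*k + (d+1) := by ring
  have hk1 : M^(γ-1) ≤ k := by
    have h7 : (d+1)*(2*(M^(γ-1))) < (d+1)*(k+1) := by omega
    have h8 : 2*(M^(γ-1)) < k+1 := Nat.lt_of_mul_lt_mul_left h7
    omega
  have hk0 : 1 ≤ k := le_trans hP1 hk1
  have hk2 : 2*(d+1)*k ≤ M^γ * M := by
    calc 2*(d+1)*k = ((d+1)*k)*2 := by ring
      _ ≤ M^γ * M := Nat.mul_le_mul hdk (by omega)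
  have hk4 : M^γ * M ≤ 2*(d+1)*(k*M) := by
    have h9a : 2*(d+1)*k = (d+1)*k + (d+1)*k := by ring
    have h9b : d+1 ≤ (d+1)*k := Nat.le_mul_of_pos_right _ (by omega)
    have h9 : M^γ ≤ 2*(d+1)*k := by omega
    calc M^γ * M ≤ (2*(d+1)*k) * M := Nat.mul_le_mul_right _ h9
      _ = 2*(d+1)*(k*M) := by ring
  -- LOWER BOUND
  obtain ⟨l, hld, D, Λ, hsub, hpos, hΛlo, hΛhi, hcard⟩ :=
    lower_inv d γ M hγ hM2 α hmono hdich k hk1 hk2 hk4 d (le_refl d)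
  have hGsub : (∑ i ∈ Finset.range (d+1),
        (Finset.Icc (0:ℤ) (((k*M : ℕ)):ℤ)).image (((M:ℤ) ^ α i) * ·))
      ⊆ M^γ • A := by
    rw [hA']
    have hcast : Finset.Icc (0:ℤ) (((k*M : ℕ)):ℤ) = Finset.Icc (0:ℤ) ((k:ℤ)*(M:ℤ)) := by
      norm_cast
    rw [hcast]
    exact sum_subset_nsmul_setA' d M α k (M^γ) hdk
  have hlow : M^E ≤ K * (M^γ • A).card := by
    have h1 : D.card * (Λ+1) ≤ (D + (Finset.Icc (0:ℤ) (Λ:ℤ)).image (((M:ℤ) ^ α l) * ·)).card :=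
      card_add_dilated_ge D ((M:ℤ)^(α l)) (by positivity) hpos Λ
    have h2 : (D + (Finset.Icc (0:ℤ) (Λ:ℤ)).image (((M:ℤ) ^ α l) * ·)).card
        ≤ (M^γ • A).card :=
      Finset.card_le_card (le_trans hsub hGsub)
    calc M^E ≤ (2*(d+1))^(d+1) * (D.card * (Λ+1)) := by rw [hE]; exact hcard
      _ ≤ K * (M^γ • A).card := by
          rw [hK]
          exact Nat.mul_le_mul_left _ (le_trans h1 h2)
  -- UPPER BOUND
  obtain ⟨l', hl'd, B, Λ', e, hsub', hΛ', hEe, hcard'⟩ :=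
    upper_inv d γ M hγ hM2 α hmono hdich d (le_refl d)
  have hhsub : M^γ • A ⊆ ∑ i ∈ Finset.range (d+1),
      (Finset.Icc (0:ℤ) (((M^γ*M : ℕ)):ℤ)).image (((M:ℤ) ^ α i) * ·) := by
    rw [hA']
    have hcast : Finset.Icc (0:ℤ) (((M^γ*M : ℕ)):ℤ)
        = Finset.Icc (0:ℤ) (((M^γ:ℕ):ℤ)*(M:ℤ)) := by
      norm_cast
    rw [hcast]
    exact nsmul_setA_subset d M α (M^γ)
  have hIcc : ((Finset.Icc (0:ℤ) (Λ':ℤ)).image (((M:ℤ) ^ α l') * ·)).card ≤ Λ' + 1 := by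
    calc ((Finset.Icc (0:ℤ) (Λ':ℤ)).image (((M:ℤ) ^ α l') * ·)).card
        ≤ (Finset.Icc (0:ℤ) (Λ':ℤ)).card := Finset.card_image_le
      _ = Λ' + 1 := by rw [Int.card_Icc]; omega
  have hX1 : 1 ≤ M^(α d - α l') * (M^γ*M) := Nat.one_le_iff_ne_zero.2 (by positivity)
  have hΛ1 : Λ' + 1 ≤ 2*(d+1) * (M^(α d - α l') * (M^γ*M)) := by
    have h4 : Λ' ≤ (d+1) * (M^(α d - α l') * (M^γ*M)) :=
      le_trans hΛ' (Nat.mul_le_mul_right _ (by omega))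
    nlinarith
  have hMEeq : K * M^E = ((2*(d+1))^d * M^e) * (2*(d+1) * (M^(α d - α l') * (M^γ*M))) := by
    have hEeq' : E = e + (α d - α l') + (γ+1) := by rw [hE]; exact hEe
    rw [hK, hEeq']
    simp only [pow_add, pow_succ, pow_zero]
    ring
  have hupp : (M^γ • A).card ≤ K * M^E := by
    calc (M^γ • A).card
        ≤ (∑ i ∈ Finset.range (d+1),
            (Finset.Icc (0:ℤ) (((M^γ*M : ℕ)):ℤ)).image (((M:ℤ) ^ α i) * ·)).card :=
          Finset.card_le_card hhsub
      _ ≤ (B + (Finset.Icc (0:ℤ) (Λ':ℤ)).image (((M:ℤ) ^ α l') * ·)).card :=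
          Finset.card_le_card hsub'
      _ ≤ B.card * ((Finset.Icc (0:ℤ) (Λ':ℤ)).image (((M:ℤ) ^ α l') * ·)).card :=
          Finset.card_add_le
      _ ≤ ((2*(d+1))^d * M^e) * (Λ' + 1) := Nat.mul_le_mul hcard' hIcc
      _ ≤ ((2*(d+1))^d * M^e) * (2*(d+1) * (M^(α d - α l') * (M^γ*M))) :=
          Nat.mul_le_mul_left _ hΛ1
      _ = K * M^E := hMEeq.symm
  -- convert to the reals
  constructor
  · rw [inv_mul_le_iff₀ (by positivity : (0:ℝ) < (K:ℝ))]
    have : ((M^E : ℕ) : ℝ) ≤ ((K * (M^γ • A).card : ℕ) : ℝ) := Nat.cast_le.2 hlow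
    push_cast at this
    convert this using 2
  · have : (((M^γ • A).card : ℕ) : ℝ) ≤ ((K * M^E : ℕ) : ℝ) := Nat.cast_le.2 hupp
    push_cast at this
    convert this using 2
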